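/- Let s ≥ 5 be an integer and let λ be an s-minimal biliaison type with u_λ ≥ 3. Let f be the residue of d_λ modulo s, with 0 ≤ f < s. Then q_s(λ) ≥ 2s + m(f,s), where m(f,s) = f(s−1)(s−f) + 2s(f−2) if either 3 ≤ f ≤ s−f or f ∈ {s−2, s−1}, and m(f,s) = f(s−1)(s−f) + 2s(s−f−2) if either 3 ≤ s−f ≤ f or f ∈ {0, 1, 2}. Moreover, m(f,s) equals the minimum of q_s(μ) over all s-minimal biliaison types μ with u_μ = 2 and d_μ ≡ f or d_μ ≡ s−f modulo s; this minimum is attained by μ = (1, f−1) and its s-dual (s−f+1, s−1) in the first case, and by μ = (1, s−f−1) and its s-dual (f+1, s−1) in the second case. -/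

import Mathlib

set_option maxHeartbeats 1000000


/-- An `s`-minimal biliaison type: a strictly increasing finite sequence of
positive integers, all strictly less than `s` (the empty sequence is allowed). -/
def SMinimal (s : ℕ) (l : List ℕ) : Prop :=
  l.Chain' (· < ·) ∧ ∀ k ∈ l, 0 < k ∧ k < s

/-- The quadratic form `q_s(λ) = Σ_i k_i(s−1)(s−k_i) − 2 Σ_{i<j} k_i(s−k_j)`. -/
def qform (s : ℕ) (l : List ℕ) : ℤ :=
  (∑ i : Fin l.length, (l.get i : ℤ) * ((s : ℤ) - 1) * ((s : ℤ) - l.get i))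
  - 2 * ∑ i : Fin l.length, ∑ j : Fin l.length,
      if (i : ℕ) < (j : ℕ) then (l.get i : ℤ) * ((s : ℤ) - l.get j) else 0

/-- The `s`-dual `λ′ = (s−k_u, …, s−k_1)` of a biliaison type. -/
def sdual (s : ℕ) (l : List ℕ) : List ℕ := (l.map (fun k => s - k)).reverse

/-- The quantity `m(f,s)` of Proposition 8.7(b). -/
def mval (s f : ℕ) : ℤ :=
  if (3 ≤ f ∧ f ≤ s - f) ∨ f = s - 2 ∨ f = s - 1 then
    (f : ℤ) * ((s : ℤ) - 1) * ((s : ℤ) - f) + 2 * s * ((f : ℤ) - 2)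
  else
    (f : ℤ) * ((s : ℤ) - 1) * ((s : ℤ) - f) + 2 * s * ((s : ℤ) - (f : ℤ) - 2)



def Wl : List ℕ → ℤ
  | [] => 0
  | a :: t => (a:ℤ) * ((a:ℤ) + 2 * t.length) + Wl t

lemma sum_get (l : List ℕ) : ∑ i : Fin l.length, (l.get i : ℤ) = (l.sum : ℤ) := by
  induction l with
  | nil => simp
  | cons a t ih => simp [Fin.sum_univ_succ, ih]

lemma qform_cons (s a : ℕ) (t : List ℕ) :
    qform s (a :: t) = (a:ℤ)*((s:ℤ)-1)*((s:ℤ)-a)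
      - 2*(a:ℤ)*((s:ℤ)*t.length - (t.sum:ℤ)) + qform s t := by
  unfold qform
  simp only [List.length_cons, Fin.sum_univ_succ, List.get_cons_zero, Fin.val_zero,
    Fin.val_succ, List.get_cons_succ, List.get_cons_succ', Nat.not_lt_zero, if_false, Nat.zero_lt_succ, if_true,
    Nat.succ_lt_succ_iff, Finset.sum_const_zero]
  have h1 : ∑ j : Fin t.length, ((a:ℤ) * ((s:ℤ) - t.get j))
      = (a:ℤ)*((s:ℤ)*t.length - (t.sum:ℤ)) := by
    rw [← Finset.mul_sum]
    congr 1
    rw [Finset.sum_sub_distrib, sum_get]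
    simp [mul_comm]
  rw [h1]
  have h3 : (∑ x : Fin t.length, (-((s:ℤ) * (t.get x)) - (s:ℤ) * (t.get x:ℤ)^2
        + (s:ℤ)^2 * (t.get x) + (t.get x:ℤ)^2))
      = ∑ x : Fin t.length, (t.get x : ℤ) * (-1 + (s:ℤ)) * ((s:ℤ) - (t.get x)) :=
    Finset.sum_congr rfl fun x _ => by ring
  ring_nf

lemma qform_eq (s : ℕ) (l : List ℕ) :
    qform s l = (l.sum:ℤ)^2 + (s:ℤ)*(((s:ℤ)-1)*(l.sum:ℤ) - Wl l) := by
  induction l with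
  | nil => simp [qform, Wl]
  | cons a t ih =>
    rw [qform_cons, ih, Wl]
    push_cast [List.sum_cons]
    ring

lemma Wl_append (xs ys : List ℕ) :
    Wl (xs ++ ys) = Wl xs + 2 * ys.length * xs.sum + Wl ys := by
  induction xs with
  | nil => simp [Wl]
  | cons a t ih =>
    simp only [List.cons_append, Wl, List.append_eq, List.length_append, List.sum_cons]
    push_cast [ih]
    ring

lemma qform_nil : qform s [] = 0 := by simp [qform]

lemma qform_single (s k : ℕ) : qform s [k] = (k:ℤ)*((s:ℤ)-1)*((s:ℤ)-k) := by
  rw [qform_cons, qform_nil]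
  simp

lemma qform_pair (s a b : ℕ) : qform s [a,b] =
    (a:ℤ)*((s:ℤ)-1)*((s:ℤ)-a) + (b:ℤ)*((s:ℤ)-1)*((s:ℤ)-b) - 2*(a:ℤ)*((s:ℤ)-b) := by
  rw [qform_cons, qform_single]
  simp
  ring


lemma mval_le (s f c : ℕ) (hf : f < s) (hfc : f ≤ c)
    (h2 : s - f ≤ c ∨ ((3 ≤ f ∧ f ≤ s - f) ∨ f = s - 2 ∨ f = s - 1)) :
    mval s f ≤ (f:ℤ)*((s:ℤ)-1)*((s:ℤ)-f) + 2*(s:ℤ)*((c:ℤ)-2) := by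
  unfold mval
  split_ifs with h
  · have h4 : ((f:ℤ) - 2) ≤ (c:ℤ) - 2 := by omega
    nlinarith [mul_le_mul_of_nonneg_left h4 (by positivity : (0:ℤ) ≤ 2*(s:ℤ))]
  · have h3 : s - f ≤ c := h2.resolve_right h
    have h4 : ((s:ℤ) - f - 2) ≤ (c:ℤ) - 2 := by omega
    nlinarith [mul_le_mul_of_nonneg_left h4 (by positivity : (0:ℤ) ≤ 2*(s:ℤ))]

lemma mval_eq2 (s f : ℕ) (hs : 5 ≤ s) (hf : f < s)
    (h4 : (3 ≤ s - f ∧ s - f ≤ f) ∨ f = 0 ∨ f = 1 ∨ f = 2) :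
    mval s f = (f:ℤ)*((s:ℤ)-1)*((s:ℤ)-f) + 2*(s:ℤ)*((s:ℤ)-(f:ℤ)-2) := by
  unfold mval
  split_ifs with h
  · have hz : (s:ℤ) = 2*(f:ℤ) := by omega
    linear_combination (-(2*(s:ℤ))) * hz
  · rfl

lemma mval_symm (s f : ℕ) (hs : 5 ≤ s) (hf0 : 0 < f) (hfs : f < s) :
    mval s (s - f) = mval s f := by
  unfold mval
  have hc : ((s - f : ℕ) : ℤ) = (s:ℤ) - (f:ℤ) := by omega
  split_ifs with h1 h2 h2
  · have hz : (s:ℤ) = 2*(f:ℤ) := by omega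
    rw [hc]; linear_combination (2*(s:ℤ)) * hz
  · rw [hc]; ring
  · rw [hc]; ring
  · exfalso; omega



lemma gap_lemma : ∀ (l : List ℕ) (_ : l.Chain' (· < ·)) (hne : l ≠ []),
    l.head hne + l.length ≤ l.getLast hne + 1 := by
  intro l
  induction l with
  | nil => intro _ hne; exact absurd rfl hne
  | cons a t ih =>
    intro h hne
    cases t with
    | nil => simp
    | cons b t' =>
      have hab : a < b := (List.isChain_cons_cons.mp h).1
      have ih' := ih (List.isChain_cons_cons.mp h).2 (List.cons_ne_nil _ _)
      rw [List.getLast_cons (List.cons_ne_nil _ _)]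
      simp only [List.head_cons, List.length_cons] at *
      omega

lemma chain_replace_last (xs : List ℕ) (b c : ℕ) (hbc : b ≤ c)
    (h : (xs ++ [b]).Chain' (· < ·)) : (xs ++ [c]).Chain' (· < ·) := by
  unfold List.Chain' at h ⊢
  rw [List.isChain_append] at h ⊢
  refine ⟨h.1, List.isChain_singleton _, ?_⟩
  intro x hx y hy
  simp only [List.head?_cons, Option.mem_def, Option.some.injEq] at hy
  subst hy
  have := h.2.2 x hx b (by simp)
  omega

lemma sdual_cons (s a : ℕ) (t : List ℕ) : sdual s (a :: t) = sdual s t ++ [s - a] := by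
  simp [sdual]

lemma sdual_length (s : ℕ) (l : List ℕ) : (sdual s l).length = l.length := by
  simp [sdual]

lemma sdual_sum (s : ℕ) : ∀ (l : List ℕ) (_ : ∀ k ∈ l, k ≤ s),
    ((sdual s l).sum : ℤ) = (s:ℤ) * l.length - (l.sum : ℤ) := by
  intro l
  induction l with
  | nil => intro _; simp [sdual]
  | cons a t ih =>
    intro hb
    rw [sdual_cons]
    have ha : a ≤ s := hb a (by simp)
    have hrec := ih (fun k hk => hb k (by simp [hk]))
    simp only [List.sum_append, List.sum_cons, List.sum_nil, List.length_cons]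
    push_cast [Nat.cast_sub ha] at hrec ⊢
    rw [hrec]
    ring

lemma sdual_Wl (s : ℕ) : ∀ (l : List ℕ) (_ : ∀ k ∈ l, k ≤ s),
    Wl (sdual s l) = (l.length:ℤ)*(s:ℤ)^2 - 2*(s:ℤ)*(l.sum:ℤ)
      + (s:ℤ)*(l.length:ℤ)*((l.length:ℤ)-1) - 2*((l.length:ℤ)-1)*(l.sum:ℤ) + Wl l := by
  intro l
  induction l with
  | nil => intro _; simp [sdual, Wl]
  | cons a t ih =>
    intro hb
    have ha : a ≤ s := hb a (by simp)
    have hbt : ∀ k ∈ t, k ≤ s := fun k hk => hb k (by simp [hk])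
    rw [sdual_cons, Wl_append, ih hbt]
    have hsum := sdual_sum s t hbt
    have hca : ((s - a : ℕ) : ℤ) = (s:ℤ) - (a:ℤ) := by omega
    simp only [Wl, List.length_cons, List.sum_cons, List.length_singleton,
      List.sum_singleton, List.length_nil]
    push_cast [Nat.cast_sub ha] at hsum ⊢
    rw [hsum]
    ring

lemma sdual_qform (s : ℕ) (l : List ℕ) (hb : ∀ k ∈ l, k ≤ s) :
    qform s (sdual s l) = qform s l := by
  rw [qform_eq, qform_eq, sdual_Wl s l hb, sdual_sum s l hb]
  ring


lemma sdual_getLast? (s b : ℕ) (t' : List ℕ) :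
    (sdual s (b :: t')).getLast? = some (s - b) := by
  simp [sdual]

lemma chain_sdual (s : ℕ) : ∀ (l : List ℕ) (_ : l.Chain' (· < ·)) (_ : ∀ k ∈ l, k < s),
    (sdual s l).Chain' (· < ·) := by
  intro l
  induction l with
  | nil => intro _ _; simp [sdual, List.Chain']
  | cons a t ih =>
    intro hc hb
    rw [sdual_cons]
    unfold List.Chain'
    rw [List.isChain_append]
    refine ⟨ih (List.isChain_cons.mp hc).2 (fun k hk => hb k (by simp [hk])),
      List.isChain_singleton _, ?_⟩
    intro x hx y hy
    simp only [List.head?_cons, Option.mem_def, Option.some.injEq] at hy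
    subst hy
    cases t with
    | nil => simp [sdual] at hx
    | cons b t' =>
      rw [sdual_getLast? s b t'] at hx
      simp only [Option.mem_def, Option.some.injEq] at hx
      subst hx
      have hab : a < b := (List.isChain_cons_cons.mp hc).1
      have hbs : b < s := hb b (by simp)
      omega

lemma sdual_SMinimal (s : ℕ) (l : List ℕ) (h : SMinimal s l) : SMinimal s (sdual s l) := by
  obtain ⟨hc, hbd⟩ := h
  constructor
  · exact chain_sdual s l hc (fun k hk => (hbd k hk).2)
  · intro k hk
    simp only [sdual, List.mem_reverse, List.mem_map] at hk
    obtain ⟨x, hx, rfl⟩ := hk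
    have := hbd x hx
    omega

lemma qpair_id (s a b : ℕ) : qform s [a, b] =
    ((a:ℤ)+(b:ℤ))*((s:ℤ)-1)*((s:ℤ)-((a:ℤ)+(b:ℤ))) + 2*(s:ℤ)*((a:ℤ)+(b:ℤ)-2)
      + 2*(s:ℤ)*((a:ℤ)-1)*((b:ℤ)-2) := by
  rw [qform_pair]; ring

lemma pairLB_low (s : ℕ) (hs : 5 ≤ s) (a b : ℕ) (ha : 0 < a) (hab : a < b) (hbs : b < s)
    (hd : a + b ≤ s) : mval s ((a + b) % s) ≤ qform s [a, b] := by
  have hb2 : 2 ≤ b := by omega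
  have hprod : 0 ≤ 2*(s:ℤ)*((a:ℤ)-1)*((b:ℤ)-2) := by
    have h1 : (0:ℤ) ≤ (a:ℤ)-1 := by omega
    have h2 : (0:ℤ) ≤ (b:ℤ)-2 := by omega
    positivity
  rcases Nat.lt_or_ge (a+b) s with hlt | hge
  · have hm : (a+b) % s = a + b := Nat.mod_eq_of_lt hlt
    rw [hm]
    have h2 : s - (a+b) ≤ a+b ∨ ((3 ≤ a+b ∧ a+b ≤ s - (a+b)) ∨ a+b = s-2 ∨ a+b = s-1) := by
      omega
    refine le_trans (mval_le s (a+b) (a+b) hlt le_rfl h2) ?_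
    rw [qpair_id]
    push_cast
    nlinarith [hprod]
  · have heq : a + b = s := le_antisymm hd hge
    have hm : (a+b) % s = 0 := by rw [heq]; exact Nat.mod_self s
    rw [hm]
    refine le_trans (mval_le s 0 s (by omega) (by omega) (Or.inl (by omega))) ?_
    rw [qpair_id]
    have hab' : (a:ℤ) + (b:ℤ) = (s:ℤ) := by exact_mod_cast congrArg (Nat.cast : ℕ → ℤ) heq
    rw [hab']
    push_cast
    nlinarith [hprod]

lemma pairLB (s : ℕ) (hs : 5 ≤ s) (a b : ℕ) (ha : 0 < a) (hab : a < b) (hbs : b < s) :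
    mval s ((a + b) % s) ≤ qform s [a, b] := by
  rcases le_or_gt (a+b) s with hd | hd
  · exact pairLB_low s hs a b ha hab hbs hd
  · have q' : qform s [a, b] = qform s [s - b, s - a] := by
      rw [qform_pair, qform_pair]
      push_cast [Nat.cast_sub (le_of_lt hbs), Nat.cast_sub (by omega : a ≤ s)]
      ring
    have hlow := pairLB_low s hs (s - b) (s - a) (by omega) (by omega) (by omega) (by omega)
    have hmod : (a+b) % s = a + b - s := by
      rw [Nat.mod_eq_sub_mod (le_of_lt hd)]
      exact Nat.mod_eq_of_lt (by omega)
    have h1 : (s - b) + (s - a) = s - ((a+b) % s) := by rw [hmod]; omega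
    have hf0 : 0 < (a+b) % s := by omega
    have hfs : (a+b) % s < s := by omega
    have h3 : (s - (a+b) % s) % s = s - (a+b) % s := Nat.mod_eq_of_lt (by omega)
    rw [h1, h3] at hlow
    rw [mval_symm s _ hs hf0 hfs] at hlow
    rw [q']
    exact hlow

lemma mod_dual (s x d u : ℕ) (hs : 0 < s) (hxd : x + d = s * u) :
    x % s = (s - d % s) % s := by
  have h0 : (x % s + d % s) % s = 0 := by
    rw [← Nat.add_mod, hxd, Nat.mul_mod_right]
  have hr : x % s < s := Nat.mod_lt _ hs
  have hf : d % s < s := Nat.mod_lt _ hs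
  obtain ⟨k, hk⟩ := Nat.dvd_of_mod_eq_zero h0
  have hsk : s * k < s * 2 := by omega
  have hk2 : k < 2 := lt_of_mul_lt_mul_left hsk (Nat.zero_le s)
  have hk01 : k = 0 ∨ k = 1 := by omega
  rcases hk01 with rfl | rfl
  · rw [Nat.mul_zero] at hk
    have hx0 : x % s = 0 := by omega
    have hd0 : d % s = 0 := by omega
    rw [hx0, hd0, Nat.sub_zero, Nat.mod_self]
  · rw [Nat.mul_one] at hk
    rcases Nat.eq_zero_or_pos (d % s) with h | h
    · exfalso; omega
    · rw [Nat.mod_eq_of_lt (by omega : s - d % s < s)]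
      omega

lemma sum_dual_nat (s : ℕ) (l : List ℕ) (hb : ∀ k ∈ l, k ≤ s) :
    (sdual s l).sum + l.sum = s * l.length := by
  have h := sdual_sum s l hb
  have : ((sdual s l).sum : ℤ) + (l.sum : ℤ) = ((s * l.length : ℕ) : ℤ) := by
    push_cast at h ⊢; linarith
  exact_mod_cast this

lemma mval_mod_dual (s : ℕ) (hs : 5 ≤ s) (l : List ℕ) (hb : ∀ k ∈ l, k ≤ s) :
    mval s ((sdual s l).sum % s) = mval s (l.sum % s) := by
  rw [mod_dual s (sdual s l).sum l.sum l.length (by omega) (sum_dual_nat s l hb)]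
  rcases Nat.eq_zero_or_pos (l.sum % s) with h | h
  · rw [h, Nat.sub_zero, Nat.mod_self]
  · have hfs : l.sum % s < s := Nat.mod_lt _ (by omega)
    rw [Nat.mod_eq_of_lt (by omega)]
    exact mval_symm s _ hs h hfs

lemma Wl_concat (xs : List ℕ) (c : ℕ) :
    Wl (xs ++ [c]) = Wl xs + 2*(xs.sum:ℤ) + (c:ℤ)*(c:ℤ) := by
  rw [Wl_append]
  simp [Wl]

lemma getLast_shape (a b : ℕ) (xs : List ℕ) :
    (a :: (xs ++ [b])).getLast (by simp) = b := by
  have h : (a :: (xs ++ [b])).getLast? = some b := by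
    rw [show a :: (xs ++ [b]) = (a :: xs) ++ [b] by simp, List.getLast?_concat]
  rw [List.getLast?_eq_getLast (by simp)] at h
  exact Option.some.inj h

lemma mainLB (s : ℕ) (hs : 5 ≤ s) :
    ∀ n l, l.length = n → SMinimal s l → 3 ≤ n →
      2*(s:ℤ) + mval s (l.sum % s) ≤ qform s l := by
  intro n
  induction n using Nat.strong_induction_on with
  | _ n IH =>
  have key : ∀ (a b : ℕ) (xs : List ℕ), (a :: (xs ++ [b])).length = n →
      SMinimal s (a :: (xs ++ [b])) → 3 ≤ n → a + b ≤ s →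
      2*(s:ℤ) + mval s ((a :: (xs ++ [b])).sum % s) ≤ qform s (a :: (xs ++ [b])) := by
    intro a b xs hlen hmin hn hab
    have hxslen : xs.length = n - 2 := by simp at hlen; omega
    have ha : 0 < a ∧ a < s := hmin.2 a (by simp)
    have hb : 0 < b ∧ b < s := hmin.2 b (by simp)
    have hgap : a + (xs.length + 2) ≤ b + 1 := by
      have h := gap_lemma (a :: (xs ++ [b])) hmin.1 (by simp)
      rw [getLast_shape] at h
      simpa using h
    have hsum : (a :: (xs ++ [b])).sum = a + xs.sum + b := by
      simp only [List.sum_cons, List.sum_append, List.sum_singleton, List.sum_nil]; omega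
    have hxsb : ∀ k ∈ xs, 0 < k ∧ k < s := fun k hk => hmin.2 k (by simp [hk])
    rcases Nat.lt_or_ge (a + b) s with hlt | hge
    · -- move a onto b
      set l' : List ℕ := xs ++ [b + a] with hl'
      have hchain' : l'.Chain' (· < ·) := by
        refine chain_replace_last xs b (b+a) (by omega) ?_
        exact hmin.1.tail
      have hmin' : SMinimal s l' := by
        refine ⟨hchain', fun k hk => ?_⟩
        rw [hl', List.mem_append] at hk
        rcases hk with hk | hk
        · exact hxsb k hk
        · simp at hk; omega
      have hlen' : l'.length = n - 1 := by simp [hl']; omega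
      have hsum' : l'.sum = (a :: (xs ++ [b])).sum := by
        simp only [hl', List.sum_cons, List.sum_append, List.sum_singleton]; omega
      have hq : qform s (a :: (xs ++ [b])) =
          qform s l' + 2*(s:ℤ)*(a:ℤ)*((b:ℤ) - ((xs.length:ℤ)+1)) := by
        rw [qform_eq, qform_eq, hl']
        simp only [List.sum_cons, List.sum_append, List.sum_singleton, List.sum_nil,
          Wl_concat, Wl, List.length_cons, List.length_append, List.length_singleton,
          List.length_nil, List.map_nil]
        push_cast
        ring
      have hd1 : (1:ℤ) ≤ (a:ℤ) := by exact_mod_cast ha.1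
      have hd2 : (a:ℤ) ≤ (b:ℤ) - ((xs.length:ℤ)+1) := by
        have : (a:ℤ) + ((xs.length:ℤ) + 2) ≤ (b:ℤ) + 1 := by exact_mod_cast hgap
        linarith
      have hprod1 : (1:ℤ) ≤ (a:ℤ) * ((b:ℤ) - ((xs.length:ℤ)+1)) := by nlinarith
      have hDelta : 2*(s:ℤ) ≤ 2*(s:ℤ)*(a:ℤ)*((b:ℤ) - ((xs.length:ℤ)+1)) := by
        nlinarith [mul_nonneg (show (0:ℤ) ≤ 2*(s:ℤ) by positivity)
          (show (0:ℤ) ≤ (a:ℤ)*((b:ℤ)-((xs.length:ℤ)+1)) - 1 by linarith)]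
      rcases Nat.lt_or_ge n 4 with hn4 | hn4
      · -- n = 3, l' is a pair
        have hxs1 : xs.length = 1 := by omega
        obtain ⟨x, rfl⟩ := List.length_eq_one_iff.mp hxs1
        have hxy : x < b + a := by
          have := hchain'
          simp only [hl', List.singleton_append] at this
          exact (List.isChain_cons_cons.mp this).1
        have hpair := pairLB s hs x (b+a) (hxsb x (by simp)).1 hxy
          (hmin'.2 (b+a) (by simp [hl'])).2
        have hmeq : (x + (b+a)) % s = (a :: ([x] ++ [b])).sum % s := by
          have hss : (a :: ([x] ++ [b])).sum = x + (b+a) := by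
            simp only [List.sum_cons, List.sum_append, List.sum_singleton, List.sum_nil]
            omega
          rw [hss]
        rw [hq]
        have hqq : qform s l' = qform s [x, b+a] := by rw [hl']; rfl
        rw [hqq]
        rw [hmeq] at hpair
        linarith
      · -- n ≥ 4, use IH on l' of length n-1
        have hIH := IH (n-1) (by omega) l' hlen' hmin' (by omega)
        rw [hsum'] at hIH
        rw [hq]
        linarith
    · -- a + b = s : drop a and b
      have heq : a + b = s := le_antisymm hab hge
      have hchainxs : xs.Chain' (· < ·) := by
        have h := hmin.1.tail
        exact (List.isChain_append.mp h).1
      have hminxs : SMinimal s xs := ⟨hchainxs, hxsb⟩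
      have hlenxs : xs.length = n - 2 := hxslen
      have hsummod : (a :: (xs ++ [b])).sum % s = xs.sum % s := by
        rw [hsum, show a + xs.sum + b = xs.sum + s by omega, Nat.add_mod_right]
      have hbz : (b:ℤ) = (s:ℤ) - (a:ℤ) := by
        have : ((a:ℤ)) + (b:ℤ) = (s:ℤ) := by exact_mod_cast heq
        linarith
      have hq : qform s (a :: (xs ++ [b])) =
          qform s xs + 2*(s:ℤ)*(a:ℤ)*((s:ℤ) - (a:ℤ) - ((xs.length:ℤ)+1)) := by
        rw [qform_eq, qform_eq]
        simp only [List.sum_cons, List.sum_append, List.sum_singleton, List.sum_nil,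
          Wl_concat, Wl, List.length_cons, List.length_append, List.length_singleton,
          List.length_nil, List.map_nil]
        push_cast
        rw [hbz]
        ring
      have hd1 : (1:ℤ) ≤ (a:ℤ) := by exact_mod_cast ha.1
      have hd2 : (a:ℤ) ≤ (s:ℤ) - (a:ℤ) - ((xs.length:ℤ)+1) := by
        have h1 : (a:ℤ) + ((xs.length:ℤ) + 2) ≤ (b:ℤ) + 1 := by exact_mod_cast hgap
        linarith [hbz]
      have hprod1 : (1:ℤ) ≤ (a:ℤ) * ((s:ℤ) - (a:ℤ) - ((xs.length:ℤ)+1)) := by nlinarith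
      have hDelta : 2*(s:ℤ) ≤ 2*(s:ℤ)*(a:ℤ)*((s:ℤ) - (a:ℤ) - ((xs.length:ℤ)+1)) := by
        nlinarith [mul_nonneg (show (0:ℤ) ≤ 2*(s:ℤ) by positivity)
          (show (0:ℤ) ≤ (a:ℤ)*((s:ℤ)-(a:ℤ)-((xs.length:ℤ)+1)) - 1 by linarith)]
      rcases Nat.lt_or_ge n 4 with hn4 | hn4
      · -- n = 3, xs = [k]
        have hxs1 : xs.length = 1 := by omega
        obtain ⟨k, rfl⟩ := List.length_eq_one_iff.mp hxs1
        have hak : a < k := (List.isChain_cons_cons.mp hmin.1).1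
        have hkb : k < b := by
          have h := hmin.1.tail
          simp only [List.singleton_append] at h
          exact (List.isChain_cons_cons.mp h).1
        have hk := hxsb k (by simp)
        have hkmod : List.sum [k] % s = k := by
          simp only [List.sum_cons, List.sum_nil, Nat.add_zero]
          exact Nat.mod_eq_of_lt hk.2
        have hmle := mval_le s k (s - a - 1) hk.2 (by omega) (Or.inl (by omega))
        have hcast : ((s - a - 1 : ℕ) : ℤ) = (s:ℤ) - (a:ℤ) - 1 := by omega
        rw [hq, hsummod, hkmod, qform_single]
        rw [hcast] at hmle
        have hsa2 : (a:ℤ) ≤ (s:ℤ) - (a:ℤ) - 2 := by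
          simp only [List.length_singleton] at hd2
          push_cast at hd2 ⊢
          linarith
        have hlen1 : (([k].length : ℕ) : ℤ) = 1 := by simp
        rw [hlen1]
        have hprod2 : (0:ℤ) ≤ 2*(s:ℤ)*((a:ℤ)-1)*((s:ℤ)-(a:ℤ)-2) := by
          have h1 : (0:ℤ) ≤ (a:ℤ)-1 := by linarith
          have h2 : (0:ℤ) ≤ (s:ℤ)-(a:ℤ)-2 := by linarith
          have h3 : (0:ℤ) ≤ 2*(s:ℤ) := by positivity
          have := mul_nonneg (mul_nonneg h3 h1) h2
          linarith
        nlinarith [hmle, hprod2]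
      · rcases Nat.lt_or_ge n 5 with hn5 | hn5
        · -- n = 4, xs is a pair
          have hxs2 : xs.length = 2 := by omega
          obtain ⟨x, y, rfl⟩ := List.length_eq_two.mp hxs2
          have hxy : x < y := (List.isChain_pair.mp hchainxs)
          have hpair := pairLB s hs x y (hxsb x (by simp)).1 hxy (hxsb y (by simp)).2
          have : List.sum [x, y] = x + y := by simp
          rw [hq, hsummod, this]
          linarith
        · -- n ≥ 5, IH on xs of length n-2 ≥ 3
          have hIH := IH (n-2) (by omega) xs hlenxs hminxs (by omega)
          rw [hq, hsummod]
          linarith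
  -- now the general case, dualizing if needed
  intro l hlen hmin hn
  have hlne : l ≠ [] := by intro h; subst h; simp at hlen; omega
  obtain ⟨a0, t0, rfl⟩ : ∃ a t, l = a :: t := by
    cases l with
    | nil => exact absurd rfl hlne
    | cons a t => exact ⟨a, t, rfl⟩
  rcases t0.eq_nil_or_concat with rfl | ⟨xs0, b0, rfl⟩
  · simp at hlen; omega
  · rw [show List.concat xs0 b0 = xs0 ++ [b0] from List.concat_eq_append]
    rw [show List.concat xs0 b0 = xs0 ++ [b0] from List.concat_eq_append] at hlen hmin
    rcases le_or_gt (a0 + b0) s with hab | hab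
    · exact key a0 b0 xs0 hlen hmin hn hab
    · -- dualize
      set l := a0 :: (xs0 ++ [b0]) with hldef
      have hbnd : ∀ k ∈ l, k ≤ s := fun k hk => le_of_lt (hmin.2 k hk).2
      have hdmin : SMinimal s (sdual s l) := sdual_SMinimal s l hmin
      have hdq : qform s (sdual s l) = qform s l := sdual_qform s l hbnd
      have hdm : mval s ((sdual s l).sum % s) = mval s (l.sum % s) := mval_mod_dual s hs l hbnd
      have hdlen : (sdual s l).length = n := by rw [sdual_length]; exact hlen
      -- decompose the dual
      have hdne : sdual s l ≠ [] := by
        intro h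
        rw [h] at hdlen
        simp at hdlen
        omega
      obtain ⟨a1, t1, hdc⟩ : ∃ a t, sdual s l = a :: t := by
        cases hsd : sdual s l with
        | nil => exact absurd hsd hdne
        | cons a t => exact ⟨a, t, rfl⟩
      rcases t1.eq_nil_or_concat with rfl | ⟨xs1, b1, rfl⟩
      · rw [hdc] at hdlen; simp at hdlen; omega
      · rw [show List.concat xs1 b1 = xs1 ++ [b1] from List.concat_eq_append] at hdc
        -- identify a1 and b1
        have ha1 : a1 = s - b0 := by
          have h1 : (sdual s l).head? = some a1 := by rw [hdc]; rfl
          have h2 : (sdual s l).head? = some (s - b0) := by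
            rw [sdual, List.head?_reverse, List.getLast?_map]
            rw [show l = (a0 :: xs0) ++ [b0] by simp [hldef], List.getLast?_concat]
            rfl
          rw [h1] at h2
          exact Option.some.inj h2
        have hb1 : b1 = s - a0 := by
          have h1 : (sdual s l).getLast? = some b1 := by
            rw [hdc, show a1 :: (xs1 ++ [b1]) = (a1 :: xs1) ++ [b1] by simp,
              List.getLast?_concat]
          have h2 : (sdual s l).getLast? = some (s - a0) := by
            rw [hldef, sdual_getLast?]
          rw [h1] at h2
          exact Option.some.inj h2
        have hab1 : a1 + b1 ≤ s := by
          have hb0s : b0 < s := (hmin.2 b0 (by simp [hldef])).2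
          have ha0s : a0 < s := (hmin.2 a0 (by simp [hldef])).2
          omega
        have hk := key a1 b1 xs1 (by rw [← hdc]; exact hdlen) (by rw [← hdc]; exact hdmin)
          hn hab1
        rw [← hdc] at hk
        rw [hdq, hdm] at hk
        exact hk


/-- Proposition 8.7(b): if `u_λ ≥ 3` and `s ≥ 5` then `q_s(λ) ≥ 2s + m(f,s)`, where
`m(f,s)` is the minimum of `q_s(μ)` over two-term `s`-minimal types `μ` of degree
`≡ f` or `≡ s−f (mod s)`, attained by `(1,f−1)` and its `s`-dual `(s−f+1,s−1)` in the
first case, and by `(1,s−f−1)` and its `s`-dual `(f+1,s−1)` in the second case. -/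
theorem stmt7 (s : ℕ) (hs : 5 ≤ s) (l : List ℕ) (hl : SMinimal s l) (hu : 3 ≤ l.length)
    (f : ℕ) (hf : f = l.sum % s) :
    2 * (s : ℤ) + mval s f ≤ qform s l ∧
    (∀ μ : List ℕ, SMinimal s μ → μ.length = 2 →
      (μ.sum % s = f ∨ μ.sum % s = (s - f) % s) → mval s f ≤ qform s μ) ∧
    (((3 ≤ f ∧ f ≤ s - f) ∨ f = s - 2 ∨ f = s - 1) →
      SMinimal s [1, f - 1] ∧ qform s [1, f - 1] = mval s f ∧
      sdual s [1, f - 1] = [s - f + 1, s - 1] ∧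
      SMinimal s [s - f + 1, s - 1] ∧ qform s [s - f + 1, s - 1] = mval s f) ∧
    (((3 ≤ s - f ∧ s - f ≤ f) ∨ f = 0 ∨ f = 1 ∨ f = 2) →
      SMinimal s [1, s - f - 1] ∧ qform s [1, s - f - 1] = mval s f ∧
      sdual s [1, s - f - 1] = [f + 1, s - 1] ∧
      SMinimal s [f + 1, s - 1] ∧ qform s [f + 1, s - 1] = mval s f) := by
  have hfs : f < s := by rw [hf]; exact Nat.mod_lt _ (by omega)
  refine ⟨?_, ?_, ?_, ?_⟩
  · rw [hf]
    exact mainLB s hs l.length l rfl hl hu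
  · intro μ hμ hlen2 hsum
    obtain ⟨x, y, rfl⟩ := List.length_eq_two.mp hlen2
    have hxy : x < y := List.isChain_pair.mp hμ.1
    have hx := hμ.2 x (by simp)
    have hy := hμ.2 y (by simp)
    have hp := pairLB s hs x y hx.1 hxy hy.2
    have hμs : List.sum [x, y] = x + y := by simp
    rw [hμs] at hsum
    rcases hsum with h | h
    · rwa [h] at hp
    · rw [h] at hp
      rcases Nat.eq_zero_or_pos f with hf0 | hf0
      · subst hf0
        rwa [Nat.sub_zero, Nat.mod_self] at hp
      · have hmm : (s - f) % s = s - f := Nat.mod_eq_of_lt (by omega)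
        rwa [hmm, mval_symm s f hs hf0 hfs] at hp
  · intro hcond
    have hf3 : 3 ≤ f := by omega
    have hm : mval s f = (f:ℤ)*((s:ℤ)-1)*((s:ℤ)-f) + 2*(s:ℤ)*((f:ℤ)-2) := by
      unfold mval; rw [if_pos hcond]
    have hc1 : ((f - 1 : ℕ) : ℤ) = (f:ℤ) - 1 := by omega
    have hc2 : ((s - f + 1 : ℕ) : ℤ) = (s:ℤ) - (f:ℤ) + 1 := by omega
    have hc3 : ((s - 1 : ℕ) : ℤ) = (s:ℤ) - 1 := by omega
    refine ⟨⟨List.isChain_pair.mpr (by omega), ?_⟩, ?_, ?_, ⟨List.isChain_pair.mpr (by omega), ?_⟩, ?_⟩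
    · intro k hk; simp at hk; omega
    · rw [qform_pair, hm, hc1]; push_cast; ring
    · simp only [sdual, List.map_cons, List.map_nil, List.reverse_cons, List.reverse_nil,
        List.nil_append, List.cons_append, List.cons.injEq, and_true, true_and]
      omega
    · intro k hk; simp at hk; omega
    · rw [qform_pair, hm, hc2, hc3]; push_cast; ring
  · intro hcond
    have hsf3 : 3 ≤ s - f := by omega
    have hm := mval_eq2 s f hs hfs hcond
    have hc1 : ((s - f - 1 : ℕ) : ℤ) = (s:ℤ) - (f:ℤ) - 1 := by omega
    have hc3 : ((s - 1 : ℕ) : ℤ) = (s:ℤ) - 1 := by omega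
    refine ⟨⟨List.isChain_pair.mpr (by omega), ?_⟩, ?_, ?_, ⟨List.isChain_pair.mpr (by omega), ?_⟩, ?_⟩
    · intro k hk; simp at hk; omega
    · rw [qform_pair, hm, hc1]; push_cast; ring
    · simp only [sdual, List.map_cons, List.map_nil, List.reverse_cons, List.reverse_nil,
        List.nil_append, List.cons_append, List.cons.injEq, and_true, true_and]
      omega
    · intro k hk; simp at hk; omega
    · rw [qform_pair, hm, hc3]; push_cast; ring
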